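/- arXiv:2106.14725 — 2 statements merged into one kernel-verified Lean document; each statement's English description precedes it below -/
import Mathlib

section
/- In $\mathbb{R}^{2,q}$, let $a = \langle e_{q+2} \rangle$, $d = \langle e_1 \rangle$, and let $x, y$ be isotropic lines with normalized spanning vectors $(q_J(\mathsf{s}_x), \mathsf{s}_x, 1)$ and $(q_J(\mathsf{s}_y), \mathsf{s}_y, 1)$ such that $\mathsf{s}_x \in c_J(V_J)$ and $\mathsf{s}_y - \mathsf{s}_x \in c_J(V_J)$. Then ${\rm cr}_1(a, x, y, d) = \frac{q_J(\mathsf{s}_y)}{q_J(\mathsf{s}_x)} > 1$. -/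
open Matrix

/-- The symmetric matrix `J` with `J_{0,q-1} = J_{q-1,0} = 1`, `J_{ii} = -1` for the
middle indices, and all other entries zero. -/
noncomputable def Jmat (q : ℕ) : Matrix (Fin q) (Fin q) ℝ :=
  Matrix.of fun i j =>
    if ((i : ℕ) = 0 ∧ (j : ℕ) = q - 1) ∨ ((i : ℕ) = q - 1 ∧ (j : ℕ) = 0) then 1
    else if i = j ∧ (i : ℕ) ≠ 0 ∧ (i : ℕ) ≠ q - 1 then -1 else 0

/-- The bilinear form `b_J(s,t) = (1/2) sᵀ J t`. -/
noncomputable def bJ (q : ℕ) (s t : Fin q → ℝ) : ℝ := (1 / 2) * (s ⬝ᵥ (Jmat q *ᵥ t))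

/-- The quadratic form `q_J(s) = b_J(s,s)`. -/
noncomputable def qJ (q : ℕ) (s : Fin q → ℝ) : ℝ := bJ q s s

/-- The open cone `c_J(V_J)` of positive vectors with positive first entry. -/
def inCJ (n : ℕ) (s : Fin (n + 1) → ℝ) : Prop := 0 < s 0 ∧ 0 < qJ (n + 1) s

/-- The partial closure `c̄_J(V_J)`: `q_J ≥ 0`, first entry still strictly positive. -/
def inCJbar (n : ℕ) (s : Fin (n + 1) → ℝ) : Prop := 0 < s 0 ∧ 0 ≤ qJ (n + 1) s

/-- Index type for `ℝ^{2,q}` in the block decomposition `⟨e₁⟩ ⊕ V_J ⊕ ⟨e_{q+2}⟩`. -/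
abbrev D2 (q : ℕ) := Fin 1 ⊕ (Fin q ⊕ Fin 1)

/-- The form `Q` of signature `(2,q)` with matrix `[[0,0,-1],[0,J,0],[-1,0,0]]`. -/
noncomputable def Q2 (q : ℕ) : Matrix (D2 q) (D2 q) ℝ :=
  Matrix.fromBlocks 0 (Matrix.fromCols 0 (-1)) (Matrix.fromRows 0 (-1))
    (Matrix.fromBlocks (Jmat q) 0 0 0)

/-- The vector `(a, s, c) ∈ ℝ^{2,q}`. -/
def vecMk (q : ℕ) (a : ℝ) (s : Fin q → ℝ) (c : ℝ) : D2 q → ℝ :=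
  Sum.elim (fun _ => a) (Sum.elim s fun _ => c)

/-- The bilinear form `Q(v,w)` on `ℝ^{2,q}`. -/
noncomputable def Qf (q : ℕ) (v w : D2 q → ℝ) : ℝ := v ⬝ᵥ (Q2 q *ᵥ w)

/-- The cross ratio of four isotropic lines in `ℝ^{2,q}`, expressed in terms of
spanning vectors:  `cr₁(V₁,W₁,W₂,V₂) = (Q(ṽ₁,w̃₂)/Q(ṽ₁,w̃₁)) (Q(ṽ₂,w̃₁)/Q(ṽ₂,w̃₂))`. -/
noncomputable def cr1Q (q : ℕ) (v1 w1 w2 v2 : D2 q → ℝ) : ℝ :=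
  (Qf q v1 w2 / Qf q v1 w1) * (Qf q v2 w1 / Qf q v2 w2)

/-- The unipotent element `E₁(s)` for `p = 2`. -/
noncomputable def E1 (q : ℕ) (s : Fin q → ℝ) : Matrix (D2 q) (D2 q) ℝ :=
  Matrix.fromBlocks 1
    (Matrix.fromCols (Matrix.of fun _ j => s j) (Matrix.of fun _ _ => qJ q s))
    0 (Matrix.fromBlocks 1 (Matrix.of fun i _ => (Jmat q *ᵥ s) i) 0 1)

lemma Jmat_apply (n : ℕ) (hn : 0 < n) (i j : Fin (n+1)) :
    Jmat (n+1) i j = (if i = 0 then if j = Fin.last n then (1:ℝ) else 0 else 0)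
      + (if i = Fin.last n then if j = 0 then 1 else 0 else 0)
      + (if i = j then if i = 0 ∨ i = Fin.last n then 0 else -1 else 0) := by
  simp only [Jmat, of_apply, Fin.ext_iff, Fin.val_last, Fin.val_zero, Nat.add_sub_cancel]
  split_ifs <;> first | omega | norm_num

lemma dot_J (n : ℕ) (hn : 0 < n) (s t : Fin (n+1) → ℝ) :
    s ⬝ᵥ (Jmat (n+1) *ᵥ t) = s 0 * t (Fin.last n) + s (Fin.last n) * t 0
      - ∑ i, (if i = 0 ∨ i = Fin.last n then 0 else s i * t i) := by
  simp only [dotProduct, Matrix.mulVec, Jmat_apply n hn, dotProduct, add_mul, ite_mul, one_mul,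
    zero_mul, neg_mul, Finset.sum_add_distrib, mul_add, Finset.mul_sum]
  simp only [Finset.sum_ite_eq', Finset.mem_univ, if_true, mul_ite, mul_zero, mul_one, mul_neg]
  have h1 : ∀ x : Fin (n+1), (∑ x1 : Fin (n+1),
      if x = 0 then if x1 = Fin.last n then s x * t x1 else 0 else 0)
      = if x = 0 then s x * t (Fin.last n) else 0 := by
    intro x; by_cases h : x = 0 <;> simp [h]
  have h2 : ∀ x : Fin (n+1), (∑ x1 : Fin (n+1),
      if x = Fin.last n then if x1 = 0 then s x * t x1 else 0 else 0)
      = if x = Fin.last n then s x * t 0 else 0 := by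
    intro x; by_cases h : x = Fin.last n <;> simp [h]
  have h3 : ∀ x : Fin (n+1), (∑ x1 : Fin (n+1),
      if x = x1 then if x = 0 ∨ x = Fin.last n then 0 else -(s x * t x1) else 0)
      = -(if x = 0 ∨ x = Fin.last n then 0 else s x * t x) := by
    intro x
    rw [Finset.sum_ite_eq Finset.univ x
      (fun x1 => if x = 0 ∨ x = Fin.last n then 0 else -(s x * t x1))]
    simp only [Finset.mem_univ, if_true]
    split_ifs <;> simp
  simp only [h1, h2, h3, Finset.sum_ite_eq', Finset.mem_univ, if_true, Finset.sum_neg_distrib]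
  ring

lemma dot_J0 (s t : Fin 1 → ℝ) : s ⬝ᵥ (Jmat 1 *ᵥ t) = s 0 * t 0 := by
  simp [Jmat, dotProduct, Matrix.mulVec, Fin.sum_univ_one]

lemma Jmat_symm (q : ℕ) : (Jmat q)ᵀ = Jmat q := by
  ext i j
  simp only [Jmat, transpose_apply, of_apply, Fin.ext_iff]
  split_ifs <;> first | rfl | omega

lemma bJ_comm (q : ℕ) (s t : Fin q → ℝ) : bJ q s t = bJ q t s := by
  unfold bJ
  rw [dotProduct_mulVec, ← mulVec_transpose, Jmat_symm, dotProduct_comm]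

lemma qJ_add (q : ℕ) (s d : Fin q → ℝ) :
    qJ q (s + d) = qJ q s + qJ q d + 2 * bJ q s d := by
  have h : bJ q d s = bJ q s d := bJ_comm q d s
  unfold qJ bJ at *
  rw [Matrix.mulVec_add, dotProduct_add, add_dotProduct, add_dotProduct]
  linarith [h]

/-- Last coordinate positivity. -/
lemma last_pos (n : ℕ) (hn : 0 < n) (s : Fin (n+1) → ℝ) (hs : inCJ n s) :
    0 < s (Fin.last n) ∧
      0 ≤ ∑ i, (if i = 0 ∨ i = Fin.last n then 0 else s i * s i) ∧
      (∑ i, (if i = 0 ∨ i = Fin.last n then 0 else s i * s i)) < 2 * (s 0 * s (Fin.last n)) := by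
  obtain ⟨h0, hq⟩ := hs
  have hq' : 0 < s 0 * s (Fin.last n) + s (Fin.last n) * s 0
      - ∑ i, (if i = 0 ∨ i = Fin.last n then 0 else s i * s i) := by
    have := hq
    unfold qJ bJ at this
    rw [dot_J n hn] at this
    linarith
  have hA : 0 ≤ ∑ i, (if i = 0 ∨ i = Fin.last n then 0 else s i * s i) := by
    apply Finset.sum_nonneg
    intro i _
    split_ifs
    · exact le_refl 0
    · exact mul_self_nonneg _
  have hAlt : (∑ i, (if i = 0 ∨ i = Fin.last n then 0 else s i * s i))
      < 2 * (s 0 * s (Fin.last n)) := by linarith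
  have hL : 0 < s (Fin.last n) := by
    by_contra h
    push_neg at h
    have : s 0 * s (Fin.last n) ≤ 0 := mul_nonpos_of_nonneg_of_nonpos (le_of_lt h0) h
    linarith
  exact ⟨hL, hA, hAlt⟩

lemma bJ_pos (n : ℕ) (s t : Fin (n+1) → ℝ) (hs : inCJ n s) (ht : inCJ n t) :
    0 < bJ (n+1) s t := by
  rcases Nat.eq_zero_or_pos n with hn | hn
  · subst hn
    unfold bJ
    rw [dot_J0]
    have := hs.1; have := ht.1
    positivity
  · obtain ⟨hsL, hsA, hsA2⟩ := last_pos n hn s hs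
    obtain ⟨htL, htB, htB2⟩ := last_pos n hn t ht
    set A := ∑ i, (if i = 0 ∨ i = Fin.last n then 0 else s i * s i) with hAdef
    set B := ∑ i, (if i = 0 ∨ i = Fin.last n then 0 else t i * t i) with hBdef
    set C := ∑ i, (if i = 0 ∨ i = Fin.last n then 0 else s i * t i) with hCdef
    have hCS : C ^ 2 ≤ A * B := by
      have := Finset.sum_mul_sq_le_sq_mul_sq Finset.univ
        (fun i => if i = 0 ∨ i = Fin.last n then 0 else s i)
        (fun i => if i = 0 ∨ i = Fin.last n then 0 else t i)
      have e1 : ∑ i, (if i = 0 ∨ i = Fin.last n then (0:ℝ) else s i)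
          * (if i = 0 ∨ i = Fin.last n then 0 else t i) = C := by
        apply Finset.sum_congr rfl; intro i _; split_ifs <;> simp
      have e2 : ∑ i, (if i = 0 ∨ i = Fin.last n then (0:ℝ) else s i) ^ 2 = A := by
        apply Finset.sum_congr rfl; intro i _; split_ifs <;> simp [sq]
      have e3 : ∑ i, (if i = 0 ∨ i = Fin.last n then (0:ℝ) else t i) ^ 2 = B := by
        apply Finset.sum_congr rfl; intro i _; split_ifs <;> simp [sq]
      rw [e1, e2, e3] at this
      exact this
    have hM : 0 < s 0 * t (Fin.last n) + s (Fin.last n) * t 0 := by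
      have := hs.1; have := ht.1
      positivity
    have hAB : A * B < (2 * (s 0 * s (Fin.last n))) * (2 * (t 0 * t (Fin.last n))) := by
      rcases lt_or_eq_of_le htB with hB | hB
      · calc A * B < (2 * (s 0 * s (Fin.last n))) * B := by
              exact mul_lt_mul_of_pos_right hsA2 hB
          _ < _ := by
              apply mul_lt_mul_of_pos_left htB2
              have := hs.1
              positivity
      · rw [← hB, mul_zero]
        have := hs.1; have := ht.1
        positivity
    have hsq : C ^ 2 < (s 0 * t (Fin.last n) + s (Fin.last n) * t 0) ^ 2 := by
      have h4 : 4 * (s 0 * t (Fin.last n)) * (s (Fin.last n) * t 0)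
          ≤ (s 0 * t (Fin.last n) + s (Fin.last n) * t 0) ^ 2 := four_mul_le_sq_add _ _
      nlinarith
    have hC : C < s 0 * t (Fin.last n) + s (Fin.last n) * t 0 :=
      lt_of_pow_lt_pow_left₀ 2 (le_of_lt hM) hsq
    unfold bJ
    rw [dot_J n hn]
    rw [← hCdef]
    linarith

lemma Qf_mk (q : ℕ) (a c a' c' : ℝ) (s s' : Fin q → ℝ) :
    Qf q (vecMk q a s c) (vecMk q a' s' c')
      = -(a * c') - (c * a') + s ⬝ᵥ (Jmat q *ᵥ s') := by
  simp [Qf, Q2, vecMk, Matrix.fromBlocks_mulVec, Matrix.fromCols_mulVec_sumElim,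
    Matrix.fromRows_mulVec, sumElim_dotProduct_sumElim, dotProduct, Matrix.mulVec,
    Matrix.neg_mulVec, Matrix.one_mulVec]
  ring

/-- For `a = ⟨e_{q+2}⟩`, `d = ⟨e₁⟩` and isotropic lines `x, y` with normalized spanning
vectors `(q_J(s_x), s_x, 1)`, `(q_J(s_y), s_y, 1)` such that `s_x ∈ c_J(V_J)` and
`s_y - s_x ∈ c_J(V_J)`, one has `cr₁(a,x,y,d) = q_J(s_y)/q_J(s_x) > 1`. -/
theorem stmt_11 (n : ℕ) (sx sy : Fin (n + 1) → ℝ)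
    (hx : inCJ n sx) (hyx : inCJ n (sy - sx)) :
    cr1Q (n + 1) (vecMk (n + 1) 0 0 1) (vecMk (n + 1) (qJ (n + 1) sx) sx 1)
        (vecMk (n + 1) (qJ (n + 1) sy) sy 1) (vecMk (n + 1) 1 0 0)
      = qJ (n + 1) sy / qJ (n + 1) sx ∧
    1 < qJ (n + 1) sy / qJ (n + 1) sx := by
  have hqx : 0 < qJ (n + 1) sx := hx.2
  have hb : 0 < bJ (n + 1) sx (sy - sx) := bJ_pos n sx (sy - sx) hx hyx
  have hsy : sy = sx + (sy - sx) := by funext i; simp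
  have hkey : qJ (n + 1) sy = qJ (n + 1) sx + qJ (n + 1) (sy - sx)
      + 2 * bJ (n + 1) sx (sy - sx) := by
    conv_lhs => rw [hsy]
    exact qJ_add (n + 1) sx (sy - sx)
  have hlt : qJ (n + 1) sx < qJ (n + 1) sy := by
    have := hyx.2
    linarith
  constructor
  · unfold cr1Q
    rw [Qf_mk, Qf_mk, Qf_mk, Qf_mk]
    simp only [zero_dotProduct, neg_zero, zero_mul, mul_zero, sub_zero, add_zero, zero_sub]
    have hqy : 0 < qJ (n + 1) sy := lt_trans hqx hlt
    have h1 : qJ (n + 1) sx ≠ 0 := ne_of_gt hqx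
    have h2 : qJ (n + 1) sy ≠ 0 := ne_of_gt hqy
    field_simp
  · exact (one_lt_div hqx).mpr hlt
end

section
/- Let $(V_1, W_1, W_2, V_2)$ be a transverse quadruple of isotropic $k$-planes in $\mathbb{R}^{p,q}$ with $\dim(V_1 \cap V_2) = k - 1$. Set $V = V_1 \cap V_2$, $V_+ = V_1 + V_2$ (a $(k+1)$-dimensional space), and let $\widehat{V}_+ = V_+/V$. Then the images $[V_1], [V_2], [W_1^\perp \cap V_+], [W_2^\perp \cap V_+]$ are four lines in the 2-dimensional space $\widehat{V}_+$, and ${\rm cr}_k(V_1, W_1, W_2, V_2)$ equals the classical projective cross ratio ${\rm cr}_1^{\widehat{V}_+}([V_1], [W_1^\perp \cap V_+], [W_2^\perp \cap V_+], [V_2])$ on $\mathbb{P}(\widehat{V}_+) \simeq \mathbb{RP}^1$. -/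
open Matrix

/-- `wedge A B` is the determinant of the matrix whose first `k` columns are the columns
of `A` (a basis of a `k`-plane `V`) and whose last `m` columns are the columns of `B`
(a basis of `W^⊥`), i.e. the number `V ∧ W^⊥` for the fixed identification of the top
exterior power with `ℝ` given by the standard basis. -/
noncomputable def wedge (k m : ℕ) (A : Matrix (Fin (k + m)) (Fin k) ℝ)
    (B : Matrix (Fin (k + m)) (Fin m) ℝ) : ℝ :=
  ((Matrix.fromCols A B).submatrix id finSumFinEquiv.symm).det

/-- The cross ratio `cr_k(V₁,W₁,W₂,V₂)`, computed from basis matrices `A₁, A₂` of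
`V₁, V₂` and basis matrices `B₁, B₂` of `W₁^⊥, W₂^⊥`:
`cr_k = (V₁∧W₂^⊥ / V₁∧W₁^⊥) · (V₂∧W₁^⊥ / V₂∧W₂^⊥)`. -/
noncomputable def crk (k m : ℕ) (A1 : Matrix (Fin (k + m)) (Fin k) ℝ)
    (B1 B2 : Matrix (Fin (k + m)) (Fin m) ℝ) (A2 : Matrix (Fin (k + m)) (Fin k) ℝ) : ℝ :=
  (wedge k m A1 B2 / wedge k m A1 B1) * (wedge k m A2 B1 / wedge k m A2 B2)

/-- The columns of a matrix are linearly independent (so it is a basis matrix of its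
column span). -/
def colsIndep {d r : ℕ} (M : Matrix (Fin d) (Fin r) ℝ) : Prop :=
  LinearIndependent ℝ fun j : Fin r => fun i : Fin d => M i j

/-- The classical projective cross ratio of four lines in a 2-dimensional space, in
terms of coordinate pairs of spanning vectors with respect to a fixed basis. -/
noncomputable def pcr (a b c d : ℝ × ℝ) : ℝ :=
  ((a.1 * c.2 - a.2 * c.1) * (d.1 * b.2 - d.2 * b.1)) /
    ((a.1 * b.2 - a.2 * b.1) * (d.1 * c.2 - d.2 * c.1))

namespace Stmt19Aux

/-- basis matrix of V ⊕ ⟨v⟩ -/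
noncomputable def Amat (r m : ℕ) (V : Matrix (Fin (r+1+m)) (Fin r) ℝ)
    (v : Fin (r+1+m) → ℝ) : Matrix (Fin (r+1+m)) (Fin (r+1)) ℝ :=
  Matrix.of fun i (j : Fin (r + 1)) => if h : (j : ℕ) < r then V i ⟨(j : ℕ), h⟩ else v i

def j0 (r m : ℕ) : Fin (r+1+m) := finSumFinEquiv (Sum.inl (Fin.last r))

noncomputable def Nmat (r m : ℕ) (V : Matrix (Fin (r+1+m)) (Fin r) ℝ)
    (B : Matrix (Fin (r+1+m)) (Fin m) ℝ) (v : Fin (r+1+m) → ℝ) :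
    Matrix (Fin (r+1+m)) (Fin (r+1+m)) ℝ :=
  (Matrix.fromCols (Amat r m V v) B).submatrix id finSumFinEquiv.symm

lemma wedge_eq (r m : ℕ) (V : Matrix (Fin (r+1+m)) (Fin r) ℝ)
    (B : Matrix (Fin (r+1+m)) (Fin m) ℝ) (v : Fin (r+1+m) → ℝ) :
    wedge (r+1) m (Amat r m V v) B = (Nmat r m V B v).det := rfl

lemma Nmat_update (r m : ℕ) (V : Matrix (Fin (r+1+m)) (Fin r) ℝ)
    (B : Matrix (Fin (r+1+m)) (Fin m) ℝ) (v w : Fin (r+1+m) → ℝ) :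
    (Nmat r m V B v).updateCol (j0 r m) w = Nmat r m V B w := by
  ext i j
  rw [Matrix.updateCol_apply]
  by_cases hj : j = j0 r m
  · subst hj
    simp only [if_pos rfl, Nmat, Matrix.submatrix_apply, id, j0,
      Equiv.symm_apply_apply, Matrix.fromCols, Amat]
    simp [Fin.last]
  · rw [if_neg hj]
    simp only [Nmat, Matrix.submatrix_apply, id]
    rcases hs : finSumFinEquiv.symm j with t | t
    · have ht : t ≠ Fin.last r := by
        intro h
        apply hj
        rw [← Equiv.apply_symm_apply finSumFinEquiv j, hs, h]; rfl
      have : (t : ℕ) < r := by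
        have := Fin.val_lt_last ht
        omega
      simp [Matrix.fromCols, Amat, this]
    · simp [Matrix.fromCols]

/-- determinant as a linear function of the distinguished column -/
noncomputable def gLin (r m : ℕ) (V : Matrix (Fin (r+1+m)) (Fin r) ℝ)
    (B : Matrix (Fin (r+1+m)) (Fin m) ℝ) : (Fin (r+1+m) → ℝ) →ₗ[ℝ] ℝ where
  toFun v := (Nmat r m V B v).det
  map_add' u v := by
    show (Nmat r m V B (u + v)).det = (Nmat r m V B u).det + (Nmat r m V B v).det
    rw [← Nmat_update r m V B 0 (u + v), ← Nmat_update r m V B 0 u,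
      ← Nmat_update r m V B 0 v, Matrix.det_updateCol_add]
  map_smul' c v := by
    simp only [RingHom.id_apply, smul_eq_mul]
    rw [← Nmat_update r m V B 0 (c • v), ← Nmat_update r m V B 0 v,
      Matrix.det_updateCol_smul]

lemma gLin_col_zero (r m : ℕ) (V : Matrix (Fin (r+1+m)) (Fin r) ℝ)
    (B : Matrix (Fin (r+1+m)) (Fin m) ℝ) (j : Fin r) :
    gLin r m V B (fun i => V i j) = 0 := by
  set M := Nmat r m V B (fun i => V i j) with hM
  have : M.det = 0 := by
    rw [← Matrix.det_transpose]
    set j1 : Fin (r+1+m) := finSumFinEquiv (Sum.inl (Fin.castSucc j)) with hj1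
    apply Matrix.det_zero_of_row_eq (i := j1) (j := j0 r m)
    · simp only [hj1, j0]
      intro h
      have := finSumFinEquiv.injective h
      have := Sum.inl.inj this
      exact (Fin.castSucc_lt_last j).ne this
    · funext i
      simp only [Matrix.transpose_apply, hM, Nmat, Matrix.submatrix_apply, id, hj1, j0,
        Equiv.symm_apply_apply, Matrix.fromCols, Amat]
      have h1 : ((Fin.castSucc j : Fin (r+1)) : ℕ) < r := j.isLt
      have h2 : ¬ ((Fin.last r : Fin (r+1)) : ℕ) < r := by simp [Fin.last]
      simp [h1, h2]
  exact this

lemma gLin_mulVec_zero (r m : ℕ) (V : Matrix (Fin (r+1+m)) (Fin r) ℝ)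
    (B : Matrix (Fin (r+1+m)) (Fin m) ℝ) (c : Fin r → ℝ) :
    gLin r m V B (V *ᵥ c) = 0 := by
  have h : V *ᵥ c = ∑ j : Fin r, c j • (fun i => V i j) := by
    funext i
    simp [Matrix.mulVec, dotProduct, Finset.sum_apply, mul_comm]
  rw [h, map_sum]
  simp [gLin_col_zero]

end Stmt19Aux

namespace Stmt19Aux

@[simp] lemma gLin_apply (r m : ℕ) (V : Matrix (Fin (r+1+m)) (Fin r) ℝ)
    (B : Matrix (Fin (r+1+m)) (Fin m) ℝ) (v : Fin (r+1+m) → ℝ) :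
    gLin r m V B v = (Nmat r m V B v).det := rfl

lemma mem_span_cols (r m : ℕ) (Qm : Matrix (Fin (r+1+m)) (Fin (r+1+m)) ℝ)
    (hQnd : IsUnit Qm.det)
    (C : Matrix (Fin (r+1+m)) (Fin (r+1)) ℝ) (hCi : colsIndep C)
    (B : Matrix (Fin (r+1+m)) (Fin m) ℝ) (hBperp : Cᵀ * Qm * B = 0) (hBi : colsIndep B)
    (w : Fin (r+1+m) → ℝ) (hw : Cᵀ *ᵥ (Qm *ᵥ w) = 0) : ∃ x, B *ᵥ x = w := by
  set L := (Cᵀ * Qm).mulVecLin with hL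
  set S := LinearMap.range B.mulVecLin with hS
  have hle : S ≤ LinearMap.ker L := by
    rintro _ ⟨y, rfl⟩
    simp only [LinearMap.mem_ker, hL, Matrix.mulVecLin_apply, Matrix.mulVec_mulVec,
      hBperp, Matrix.zero_mulVec]
  have hSrank : Module.finrank ℝ S = m := by
    rw [hS, Matrix.range_mulVecLin]
    have : Module.finrank ℝ (Submodule.span ℝ (Set.range B.col))
        = Fintype.card (Fin m) := finrank_span_eq_card hBi
    simpa using this
  have hCrank : C.rank = r + 1 := by
    rw [Matrix.rank]
    have : Module.finrank ℝ (LinearMap.range C.mulVecLin) = Fintype.card (Fin (r+1)) := by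
      rw [Matrix.range_mulVecLin]
      exact finrank_span_eq_card hCi
    simpa using this
  have hLrank : Module.finrank ℝ (LinearMap.range L) = r + 1 := by
    have : (Cᵀ * Qm).rank = r + 1 := by
      rw [Matrix.rank_mul_eq_left_of_isUnit_det Qm Cᵀ hQnd, Matrix.rank_transpose, hCrank]
    exact this
  have hker : Module.finrank ℝ (LinearMap.ker L) = m := by
    have h := LinearMap.finrank_range_add_finrank_ker L
    rw [hLrank] at h
    simp only [Module.finrank_pi, Fintype.card_fin] at h
    omega
  have heq : S = LinearMap.ker L :=
    Submodule.eq_of_le_of_finrank_le hle (by rw [hker, hSrank])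
  have hwker : w ∈ LinearMap.ker L := by
    simp only [LinearMap.mem_ker, hL, Matrix.mulVecLin_apply, ← Matrix.mulVec_mulVec, hw]
  rw [← heq] at hwker
  exact hwker

lemma det_Nmat_zero (r m : ℕ) (V : Matrix (Fin (r+1+m)) (Fin r) ℝ)
    (B : Matrix (Fin (r+1+m)) (Fin m) ℝ) (w : Fin (r+1+m) → ℝ)
    (hx : ∃ x, B *ᵥ x = w) : (Nmat r m V B w).det = 0 := by
  obtain ⟨x, hx⟩ := hx
  rw [← Matrix.exists_mulVec_eq_zero_iff]
  refine ⟨Sum.elim (Pi.single (Fin.last r) 1) (-x) ∘ finSumFinEquiv.symm, ?_, ?_⟩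
  · intro h
    have h2 := congrFun h (j0 r m)
    simp only [Function.comp_apply, j0, Equiv.symm_apply_apply, Sum.elim_inl,
      Pi.single_eq_same, Pi.zero_apply] at h2
    exact one_ne_zero h2
  · rw [Nmat, Matrix.submatrix_mulVec_equiv]
    have hcomp : (Sum.elim (Pi.single (Fin.last r) 1) (-x) ∘ finSumFinEquiv.symm)
        ∘ (finSumFinEquiv.symm).symm = Sum.elim (Pi.single (Fin.last r) 1) (-x) := by
      funext s; simp
    rw [hcomp, Matrix.fromCols_mulVec_sumElim]
    have h1 : Amat r m V w *ᵥ Pi.single (Fin.last r) 1 = w := by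
      funext i
      rw [Matrix.mulVec_single]
      simp [Amat, Fin.last]
    rw [h1, Matrix.mulVec_neg, hx]
    funext i; simp

lemma rel (r m : ℕ) (V : Matrix (Fin (r+1+m)) (Fin r) ℝ)
    (B : Matrix (Fin (r+1+m)) (Fin m) ℝ) (v1 v2 : Fin (r+1+m) → ℝ)
    (c : Fin r → ℝ) (a b : ℝ) (w : Fin (r+1+m) → ℝ)
    (hw : w = V *ᵥ c + a • v1 + b • v2)
    (hz : (Nmat r m V B w).det = 0) :
    a * (Nmat r m V B v1).det + b * (Nmat r m V B v2).det = 0 := by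
  have h1 : gLin r m V B w = 0 := hz
  rw [hw, map_add, map_add, _root_.map_smul, _root_.map_smul] at h1
  rw [gLin_mulVec_zero] at h1
  simpa using h1

end Stmt19Aux


/-- Projection of the cross ratio: let `(V₁,W₁,W₂,V₂)` be a transverse quadruple of
isotropic `(r+1)`-planes with `dim (V₁ ∩ V₂) = r`; write `V₁ = V ⊕ ⟨v₁⟩`,
`V₂ = V ⊕ ⟨v₂⟩` with `V = V₁ ∩ V₂`, and for `j = 1,2` pick `w_j ∈ W_j^⊥ ∩ V₊`
(`V₊ = V₁ + V₂`), `w_j = V c_j + α_j v₁ + β_j v₂` with `(α_j, β_j) ≠ 0`, so that in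
`V̂₊ = V₊/V` (with basis `[v₁], [v₂]`) the four lines `[V₁], [W₁^⊥∩V₊], [W₂^⊥∩V₊], [V₂]`
have coordinates `(1,0), (α₁,β₁), (α₂,β₂), (0,1)`.  Then `cr_{r+1}(V₁,W₁,W₂,V₂)` equals
the classical projective cross ratio of these four lines in `ℙ(V̂₊) ≃ ℝℙ¹`. -/
theorem stmt_19 (r m : ℕ)
    (Qm : Matrix (Fin (r + 1 + m)) (Fin (r + 1 + m)) ℝ) (hQ : Qmᵀ = Qm)
    (hQnd : IsUnit Qm.det)
    (V : Matrix (Fin (r + 1 + m)) (Fin r) ℝ) (v1 v2 : Fin (r + 1 + m) → ℝ)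
    (hindep : LinearIndependent ℝ fun j : Fin (r + 2) => fun i : Fin (r + 1 + m) =>
      if h : (j : ℕ) < r then V i ⟨(j : ℕ), h⟩ else if (j : ℕ) = r then v1 i else v2 i)
    (A1 A2 : Matrix (Fin (r + 1 + m)) (Fin (r + 1)) ℝ)
    (hA1 : A1 = Matrix.of fun i (j : Fin (r + 1)) =>
      if h : (j : ℕ) < r then V i ⟨(j : ℕ), h⟩ else v1 i)
    (hA2 : A2 = Matrix.of fun i (j : Fin (r + 1)) =>
      if h : (j : ℕ) < r then V i ⟨(j : ℕ), h⟩ else v2 i)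
    (hA1iso : A1ᵀ * Qm * A1 = 0) (hA2iso : A2ᵀ * Qm * A2 = 0)
    (C1 C2 : Matrix (Fin (r + 1 + m)) (Fin (r + 1)) ℝ)
    (hC1iso : C1ᵀ * Qm * C1 = 0) (hC2iso : C2ᵀ * Qm * C2 = 0)
    (hC1i : colsIndep C1) (hC2i : colsIndep C2)
    (B1 B2 : Matrix (Fin (r + 1 + m)) (Fin m) ℝ)
    (hB1perp : C1ᵀ * Qm * B1 = 0) (hB2perp : C2ᵀ * Qm * B2 = 0)
    (hB1i : colsIndep B1) (hB2i : colsIndep B2)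
    (h11 : wedge (r + 1) m A1 B1 ≠ 0) (h12 : wedge (r + 1) m A1 B2 ≠ 0)
    (h21 : wedge (r + 1) m A2 B1 ≠ 0) (h22 : wedge (r + 1) m A2 B2 ≠ 0)
    (c1 c2 : Fin r → ℝ) (al1 be1 al2 be2 : ℝ)
    (w1 w2 : Fin (r + 1 + m) → ℝ)
    (hw1 : w1 = V *ᵥ c1 + al1 • v1 + be1 • v2)
    (hw2 : w2 = V *ᵥ c2 + al2 • v1 + be2 • v2)
    (hw1perp : C1ᵀ *ᵥ (Qm *ᵥ w1) = 0) (hw2perp : C2ᵀ *ᵥ (Qm *ᵥ w2) = 0)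
    (hw1ne : (al1, be1) ≠ (0, 0)) (hw2ne : (al2, be2) ≠ (0, 0)) :
    crk (r + 1) m A1 B1 B2 A2 = pcr (1, 0) (al1, be1) (al2, be2) (0, 1) := by
  have e1 : al1 * wedge (r + 1) m A1 B1 + be1 * wedge (r + 1) m A2 B1 = 0 := by
    rw [hA1, hA2]
    exact Stmt19Aux.rel r m V B1 v1 v2 c1 al1 be1 w1 hw1
      (Stmt19Aux.det_Nmat_zero r m V B1 w1
        (Stmt19Aux.mem_span_cols r m Qm hQnd C1 hC1i B1 hB1perp hB1i w1 hw1perp))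
  have e2 : al2 * wedge (r + 1) m A1 B2 + be2 * wedge (r + 1) m A2 B2 = 0 := by
    rw [hA1, hA2]
    exact Stmt19Aux.rel r m V B2 v1 v2 c2 al2 be2 w2 hw2
      (Stmt19Aux.det_Nmat_zero r m V B2 w2
        (Stmt19Aux.mem_span_cols r m Qm hQnd C2 hC2i B2 hB2perp hB2i w2 hw2perp))
  set W11 := wedge (r + 1) m A1 B1 with hW11
  set W12 := wedge (r + 1) m A1 B2 with hW12
  set W21 := wedge (r + 1) m A2 B1 with hW21
  set W22 := wedge (r + 1) m A2 B2 with hW22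
  have hal1 : al1 ≠ 0 := by
    intro h; rw [h] at e1
    have h' : be1 * W21 = 0 := by linarith
    have hbe1 : be1 = 0 := (mul_eq_zero.mp h').resolve_right h21
    exact hw1ne (by rw [h, hbe1])
  have hbe1 : be1 ≠ 0 := by
    intro h; rw [h] at e1
    have h' : al1 * W11 = 0 := by linarith
    have hal1' : al1 = 0 := (mul_eq_zero.mp h').resolve_right h11
    exact hw1ne (by rw [h, hal1'])
  have hal2 : al2 ≠ 0 := by
    intro h; rw [h] at e2
    have h' : be2 * W22 = 0 := by linarith
    have hbe2 : be2 = 0 := (mul_eq_zero.mp h').resolve_right h22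
    exact hw2ne (by rw [h, hbe2])
  have hbe2 : be2 ≠ 0 := by
    intro h; rw [h] at e2
    have h' : al2 * W12 = 0 := by linarith
    have hal2' : al2 = 0 := (mul_eq_zero.mp h').resolve_right h12
    exact hw2ne (by rw [h, hal2'])
  rw [crk, pcr]
  simp only [← hW11, ← hW12, ← hW21, ← hW22]
  simp only [one_mul, zero_mul, mul_zero, mul_one, sub_zero, zero_sub]
  rw [div_mul_div_comm, div_eq_div_iff (mul_ne_zero h11 h22)
    (by exact mul_ne_zero hbe1 (neg_ne_zero.mpr hal2))]
  linear_combination (be2 * W22) * e1 - (be1 * W21) * e2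
end
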